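/- Let X be a separable normed space over ℝ and Φ : X → ℝⁿ a continuous linear surjective operator. Let {x_i}_{i∈ℕ} be a dense sequence in X. Then there exist indices i₁, ..., i_n such that the vectors x_{i₁}, ..., x_{i_n} are linearly independent and the restriction of Φ to W = span{x_{i₁}, ..., x_{i_n}} is a linear isomorphism from W onto ℝⁿ. -/

import Mathlib

theorem stmt2 (X : Type*) [NormedAddCommGroup X] [NormedSpace ℝ X]
    (n : ℕ) (Φ : X →L[ℝ] (Fin n → ℝ)) (hΦ : Function.Surjective Φ)
    (x : ℕ → X) (hx : DenseRange x) :
    ∃ idx : Fin n → ℕ,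
      LinearIndependent ℝ (x ∘ idx) ∧
      Function.Bijective
        (fun w : ↥(Submodule.span ℝ (Set.range (x ∘ idx))) => Φ (w : X)) := by
  classical
  set V := Submodule.span ℝ (Set.range (⇑Φ ∘ x)) with hVdef
  have hV : V = ⊤ := by
    have hclosed : IsClosed (V : Set (Fin n → ℝ)) := V.closed_of_finiteDimensional
    rw [eq_top_iff]
    rintro y -
    obtain ⟨z, rfl⟩ := hΦ y
    have hz : z ∈ closure (Set.range x) := hx z
    have h1 : Φ z ∈ closure (V : Set (Fin n → ℝ)) :=
      map_mem_closure Φ.continuous hz (by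
        rintro a ⟨i, rfl⟩
        exact Submodule.subset_span ⟨i, rfl⟩)
    rwa [hclosed.closure_eq] at h1
  obtain ⟨t, hts, hspan, hli⟩ := exists_linearIndependent ℝ (Set.range (⇑Φ ∘ x))
  rw [← hVdef, hV] at hspan
  have htfin : t.Finite := hli.setFinite
  have : Fintype t := htfin.fintype
  have hcard : Fintype.card t = n := by
    let b : Module.Basis t ℝ (Fin n → ℝ) := Module.Basis.mk hli (by rw [Subtype.range_coe, hspan])
    have h1 := Module.finrank_eq_card_basis b
    simpa using h1.symm
  let e : Fin n ≃ t := (Fintype.equivFinOfCardEq hcard).symm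
  have hmem : ∀ k : Fin n, ∃ i, (⇑Φ ∘ x) i = (e k : Fin n → ℝ) := fun k => hts (e k).2
  choose idx hidx using hmem
  have hcompeq : ⇑Φ ∘ (x ∘ idx) = (fun a : t => (a : Fin n → ℝ)) ∘ e := by
    funext k; exact hidx k
  have hv : LinearIndependent ℝ (⇑Φ ∘ (x ∘ idx)) := by
    rw [hcompeq]
    exact hli.comp e e.injective
  have hrange : Set.range (⇑Φ ∘ (x ∘ idx)) = t := by
    rw [hcompeq, Set.range_comp]
    rw [Set.range_eq_univ.mpr e.surjective]
    simp [Set.image_univ, Subtype.range_coe]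
  have hspan' : Submodule.span ℝ (Set.range (⇑Φ ∘ (x ∘ idx))) = ⊤ := by
    rw [hrange, hspan]
  let b' : Module.Basis (Fin n) ℝ (Fin n → ℝ) := Module.Basis.mk hv (hspan' ▸ le_rfl)
  have hb' : ∀ k, b' k = Φ (x (idx k)) := fun k => by simp [b', Module.Basis.mk_apply]
  refine ⟨idx, ?_, ?_⟩
  · exact LinearIndependent.of_comp Φ.toLinearMap hv
  · set W := Submodule.span ℝ (Set.range (x ∘ idx)) with hWdef
    let g : W →ₗ[ℝ] (Fin n → ℝ) := Φ.toLinearMap ∘ₗ W.subtype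
    have hginj : Function.Injective g := by
      rw [← LinearMap.ker_eq_bot]
      rw [eq_bot_iff]
      rintro ⟨w, hw⟩ hker
      have hker' : Φ w = 0 := hker
      rw [hWdef, Submodule.mem_span_range_iff_exists_fun] at hw
      obtain ⟨c, hc⟩ := hw
      have hsum : ∑ k, c k • (⇑Φ ∘ (x ∘ idx)) k = 0 := by
        have : Φ (∑ k, c k • (x ∘ idx) k) = 0 := by rw [hc]; exact hker'
        simpa using this
      have hc0 := Fintype.linearIndependent_iff.mp hv c hsum
      have : w = 0 := by
        rw [← hc]
        simp [hc0]
      simp [this]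
    have hgsurj : Function.Surjective g := by
      intro y
      refine ⟨⟨∑ k, b'.repr y k • x (idx k), ?_⟩, ?_⟩
      · exact Submodule.sum_mem _ fun k _ =>
          Submodule.smul_mem _ _ (Submodule.subset_span ⟨k, rfl⟩)
      · show Φ (∑ k, b'.repr y k • x (idx k)) = y
        have : Φ (∑ k, b'.repr y k • x (idx k)) = ∑ k, b'.repr y k • b' k := by
          simp [hb']
        rw [this, Module.Basis.sum_repr]
    exact ⟨hginj, hgsurj⟩
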